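/- Let A be a Banach lattice algebra with identity e, let a ∈ A with a ≥ 0, and set aₙ = a ⊓ (n•e) for n ≥ 1. Then for all integers m ≥ n ≥ 1 one has ‖a_m − a_n‖ ≤ ‖a‖²/n; consequently the sequence (aₙ) is norm-Cauchy, it converges in norm to some b ∈ A with b ≥ 0, and b is the supremum of the set {a ⊓ (n•e) : n ≥ 1} in A. -/

import Mathlib

set_option linter.unusedSectionVars false

section Aux

variable {A : Type*} [NormedAddCommGroup A] [Lattice A] [HasSolidNorm A] [IsOrderedAddMonoid A]
  [NormedSpace ℝ A] [PosSMulStrictMono ℝ A] [PosSMulReflectLT ℝ A]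

private lemma norm_mono_nonneg {u w : A} (hu : 0 ≤ u) (huw : u ≤ w) : ‖u‖ ≤ ‖w‖ := by
  refine HasSolidNorm.solid ?_
  rw [abs_of_nonneg hu]
  exact huw.trans (le_abs_self w)

variable (mul : A →ₗ[ℝ] A →ₗ[ℝ] A)
  (mul_nonneg : ∀ a b : A, 0 ≤ a → 0 ≤ b → 0 ≤ mul a b)

include mul_nonneg in
private lemma mul_mono_right {x y z : A} (hx : 0 ≤ x) (h : y ≤ z) : mul x y ≤ mul x z := by
  have h1 : 0 ≤ mul x (z - y) := mul_nonneg x (z - y) hx (sub_nonneg.2 h)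
  rw [map_sub] at h1
  exact sub_nonneg.1 h1

include mul_nonneg in
private lemma mul_mono_left {x y z : A} (hx : 0 ≤ x) (h : y ≤ z) : mul y x ≤ mul z x := by
  have h1 : 0 ≤ mul (z - y) x := mul_nonneg (z - y) x (sub_nonneg.2 h) hx
  have h2 : mul (z - y) x = mul z x - mul y x := by rw [map_sub]; rfl
  rw [h2] at h1
  exact sub_nonneg.1 h1

include mul_nonneg in
/-- Bernau–Huijsmans: the identity of a Banach lattice algebra with `‖e‖ = 1` is positive. -/
private lemma unit_nonneg
    (mul_assoc : ∀ a b c : A, mul (mul a b) c = mul a (mul b c))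
    (norm_mul_le : ∀ a b : A, ‖mul a b‖ ≤ ‖a‖ * ‖b‖)
    (e : A) (one_mul : ∀ a : A, mul e a = a) (mul_one : ∀ a : A, mul a e = a)
    (norm_e : ‖e‖ = 1) : 0 ≤ e := by
  set p := e⁺ with hp
  set q := e⁻ with hq
  have hpq0 : p ⊓ q = 0 := posPart_inf_negPart_eq_zero e
  have hpsub : p - q = e := posPart_sub_negPart e
  have habs : p + q = |e| := posPart_add_negPart e
  have hp0 : 0 ≤ p := posPart_nonneg e
  have hq0 : 0 ≤ q := negPart_nonneg e
  have hnp : ‖p‖ ≤ 1 := by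
    have h : |p| ≤ |e| := by
      rw [abs_of_nonneg hp0, ← habs]; exact le_add_of_nonneg_right hq0
    simpa [norm_e] using HasSolidNorm.solid h
  have hnq : ‖q‖ ≤ 1 := by
    have h : |q| ≤ |e| := by
      rw [abs_of_nonneg hq0, ← habs]; exact le_add_of_nonneg_left hp0
    simpa [norm_e] using HasSolidNorm.solid h
  set Q := mul q q with hQ
  have hQ0 : 0 ≤ Q := mul_nonneg q q hq0 hq0
  -- basic algebra identities
  have hqp : mul q p = q + Q := by
    have h1 : mul q e = q := mul_one q
    rw [← hpsub, map_sub] at h1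
    exact sub_eq_iff_eq_add.1 h1
  have hpq : mul p q = q + Q := by
    have h1 : mul e q = q := one_mul q
    rw [← hpsub] at h1
    have h2 : mul (p - q) q = mul p q - mul q q := by rw [map_sub]; rfl
    rw [h2] at h1
    exact sub_eq_iff_eq_add.1 h1
  have hpp : mul p p = p + q + Q := by
    have h1 : mul p e = p := mul_one p
    rw [← hpsub, map_sub] at h1
    have h3 : mul p p = p + mul p q := sub_eq_iff_eq_add.1 h1
    rw [h3, hpq]; abel
  -- Step 1: Q = 0
  have hQzero : Q = 0 := by
    have key : ∀ k : ℕ, ∃ x : A, ‖x‖ ≤ 1 ∧ q + (k : ℝ) • Q ≤ mul q x := by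
      intro k
      induction k with
      | zero => exact ⟨e, norm_e.le, by simpa using (mul_one q).ge⟩
      | succ k ih =>
        obtain ⟨x, hx1, hx2⟩ := ih
        refine ⟨mul x p, (norm_mul_le x p).trans (by nlinarith [norm_nonneg x]), ?_⟩
        have h1 : mul (q + (k : ℝ) • Q) p ≤ mul (mul q x) p :=
          mul_mono_left mul mul_nonneg hp0 hx2
        have h2 : mul (mul q x) p = mul q (mul x p) := mul_assoc q x p
        have h3 : mul (q + (k : ℝ) • Q) p = mul q p + (k : ℝ) • mul Q p := by
          rw [map_add, map_smul]; rfl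
        have h4 : mul Q p = Q + mul q Q := by
          rw [hQ, mul_assoc q q p, hqp, map_add]
        have h5 : Q + mul q Q ≥ Q := le_add_of_nonneg_right (mul_nonneg q Q hq0 hQ0)
        have h6 : (k : ℝ) • (Q + mul q Q) ≥ (k : ℝ) • Q :=
          smul_le_smul_of_nonneg_left h5 (Nat.cast_nonneg k)
        calc q + ((k + 1 : ℕ) : ℝ) • Q = (q + Q) + (k : ℝ) • Q := by
              push_cast; rw [add_smul, one_smul]; abel
          _ ≤ (q + Q) + (k : ℝ) • (Q + mul q Q) := by exact add_le_add_right h6 _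
          _ = mul q p + (k : ℝ) • mul Q p := by rw [hqp, h4]
          _ = mul (q + (k : ℝ) • Q) p := h3.symm
          _ ≤ mul (mul q x) p := h1
          _ = mul q (mul x p) := h2
    have hbnd : ∀ k : ℕ, (k : ℝ) * ‖Q‖ ≤ 1 := by
      intro k
      obtain ⟨x, hx1, hx2⟩ := key k
      have h0 : (0 : A) ≤ (k : ℝ) • Q := smul_nonneg (Nat.cast_nonneg k) hQ0
      have h1 : (k : ℝ) • Q ≤ mul q x := le_trans (le_add_of_nonneg_left hq0) hx2
      have h2 : ‖(k : ℝ) • Q‖ ≤ ‖mul q x‖ := norm_mono_nonneg h0 h1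
      have h3 : ‖mul q x‖ ≤ 1 := (norm_mul_le q x).trans (by nlinarith [norm_nonneg q, norm_nonneg x])
      calc (k : ℝ) * ‖Q‖ = ‖(k : ℝ) • Q‖ := by
            rw [norm_smul, Real.norm_natCast]
        _ ≤ 1 := h2.trans h3
    by_contra hne
    have hQpos : 0 < ‖Q‖ := norm_pos_iff.2 hne
    obtain ⟨k, hk⟩ := exists_nat_gt (1 / ‖Q‖)
    have := hbnd k
    have hklarge : (k : ℝ) * ‖Q‖ > 1 := by
      rw [gt_iff_lt, ← div_lt_iff₀ hQpos] at *
      exact hk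
    linarith
  -- Step 2: q = 0
  have hqp' : mul q p = q := by rw [hqp, hQzero, add_zero]
  have hpq' : mul p q = q := by rw [hpq, hQzero, add_zero]
  have hpp' : mul p p = p + q := by rw [hpp, hQzero, add_zero]
  have key2 : ∀ k : ℕ, ∃ x : A, ‖x‖ ≤ 1 ∧ p + (k : ℝ) • q ≤ x := by
    intro k
    induction k with
    | zero => exact ⟨p, hnp, by simp⟩
    | succ k ih =>
      obtain ⟨x, hx1, hx2⟩ := ih
      refine ⟨mul x p, (norm_mul_le x p).trans (by nlinarith [norm_nonneg x]), ?_⟩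
      have h1 : mul (p + (k : ℝ) • q) p ≤ mul x p :=
        mul_mono_left mul mul_nonneg hp0 hx2
      have h3 : mul (p + (k : ℝ) • q) p = mul p p + (k : ℝ) • mul q p := by
        rw [map_add, map_smul]; rfl
      calc p + ((k + 1 : ℕ) : ℝ) • q = (p + q) + (k : ℝ) • q := by
            push_cast; rw [add_smul, one_smul]; abel
        _ = mul p p + (k : ℝ) • mul q p := by rw [hpp', hqp']
        _ = mul (p + (k : ℝ) • q) p := h3.symm
        _ ≤ mul x p := h1
  have hqzero : q = 0 := by
    have hbnd2 : ∀ k : ℕ, (k : ℝ) * ‖q‖ ≤ 1 := by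
      intro k
      obtain ⟨x, hx1, hx2⟩ := key2 k
      have h0 : (0 : A) ≤ (k : ℝ) • q := smul_nonneg (Nat.cast_nonneg k) hq0
      have h1 : (k : ℝ) • q ≤ x := le_trans (le_add_of_nonneg_left hp0) hx2
      have h2 : ‖(k : ℝ) • q‖ ≤ ‖x‖ := norm_mono_nonneg h0 h1
      calc (k : ℝ) * ‖q‖ = ‖(k : ℝ) • q‖ := by rw [norm_smul, Real.norm_natCast]
        _ ≤ 1 := h2.trans hx1
    by_contra hne
    have hqpos : 0 < ‖q‖ := norm_pos_iff.2 hne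
    obtain ⟨k, hk⟩ := exists_nat_gt (1 / ‖q‖)
    have h := hbnd2 k
    have : 1 / ‖q‖ < k := hk
    rw [div_lt_iff₀ hqpos] at this
    linarith
  rw [← hpsub, hqzero, sub_zero]
  exact hp0

private lemma inf_sub_const {x y c : A} : (x - c) ⊓ (y - c) = x ⊓ y - c := by
  apply le_antisymm
  · rw [le_sub_iff_add_le]
    refine le_inf ?_ ?_
    · calc (x - c) ⊓ (y - c) + c ≤ (x - c) + c := add_le_add_left inf_le_left c
        _ = x := by abel
    · calc (x - c) ⊓ (y - c) + c ≤ (y - c) + c := add_le_add_left inf_le_right c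
        _ = y := by abel
  · exact le_inf (sub_le_sub_right inf_le_left c) (sub_le_sub_right inf_le_right c)

include mul_nonneg in
/-- Key estimate: `n • (a ⊓ me - a ⊓ ne) ≤ a * a` for `n ≤ m`. -/
private lemma key_est
    (e : A) (he : 0 ≤ e)
    (one_mul : ∀ x : A, mul e x = x) (mul_one : ∀ x : A, mul x e = x)
    (a : A) (ha : 0 ≤ a) (n m : ℕ) (hnm : n ≤ m) :
    0 ≤ a ⊓ (m • e) - a ⊓ (n • e) ∧
      (n : ℝ) • (a ⊓ (m • e) - a ⊓ (n • e)) ≤ mul a a := by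
  set bn : A := a ⊓ (n • e) with hbn
  set bm : A := a ⊓ (m • e) with hbm
  set d : A := bm - bn with hd
  set u : A := a - bn with hu
  set v : A := n • e - bn with hv
  set k : ℕ := m - n with hk
  have hkn : n + k = m := by omega
  have hne0 : (0 : A) ≤ n • e := nsmul_nonneg he n
  have hke0 : (0 : A) ≤ k • e := nsmul_nonneg he k
  have hbn0 : 0 ≤ bn := le_inf ha hne0
  have hbm0 : 0 ≤ bm := le_inf ha (nsmul_nonneg he m)
  have hmono : bn ≤ bm := inf_le_inf_left a (nsmul_le_nsmul_left he hnm)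
  have hd0 : 0 ≤ d := sub_nonneg.2 hmono
  have hdu : d ≤ u := sub_le_sub_right inf_le_left bn
  have hu0 : 0 ≤ u := hd0.trans hdu
  have hua : u ≤ a := sub_le_self a hbn0
  have hv0 : 0 ≤ v := sub_nonneg.2 inf_le_right
  have hvne : v ≤ n • e := sub_le_self _ hbn0
  have huv : u ⊓ v = 0 := by
    rw [hu, hv, inf_sub_const, ← hbn, sub_self]
  have hdv : d ⊓ v = 0 :=
    le_antisymm ((inf_le_inf_right v hdu).trans huv.le) (le_inf hd0 hv0)
  -- d ≤ k • e
  have hdke : d ≤ k • e := by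
    rw [hd, sub_le_iff_le_add]
    have h1 : bm - k • e ≤ bn := by
      refine le_inf ?_ ?_
      · calc bm - k • e ≤ a - k • e := sub_le_sub_right inf_le_left _
          _ ≤ a := sub_le_self a hke0
      · calc bm - k • e ≤ m • e - k • e := sub_le_sub_right inf_le_right _
          _ = n • e := by rw [← hkn, add_nsmul]; abel
    calc bm = (bm - k • e) + k • e := by abel
      _ ≤ bn + k • e := add_le_add_left h1 _
      _ = k • e + bn := add_comm _ _
  -- mul v d ≤ 0
  have hz0 : mul v d ≤ 0 := by
    have hz1 : mul v d ≤ (k : ℝ) • v := by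
      have : mul v d ≤ mul v ((k : ℝ) • e) := by
        refine mul_mono_right mul mul_nonneg hv0 ?_
        rw [Nat.cast_smul_eq_nsmul]; exact hdke
      rwa [map_smul, mul_one] at this
    have hz2 : mul v d ≤ (n : ℝ) • d := by
      have : mul v d ≤ mul ((n : ℝ) • e) d := by
        refine mul_mono_left mul mul_nonneg hd0 ?_
        rw [Nat.cast_smul_eq_nsmul]; exact hvne
      have h2 : mul ((n : ℝ) • e) d = (n : ℝ) • mul e d := by rw [map_smul]; rfl
      rwa [h2, one_mul] at this
    set c : ℝ := (k : ℝ) + (n : ℝ) + 1 with hc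
    have hcpos : 0 < c := by positivity
    have hzc1 : mul v d ≤ c • v := by
      refine hz1.trans ?_
      have : ((k : ℝ)) • v ≤ c • v := by
        have h := smul_nonneg (by positivity : (0:ℝ) ≤ (n : ℝ) + 1) hv0
        calc (k : ℝ) • v = (k : ℝ) • v + 0 := by rw [add_zero]
          _ ≤ (k : ℝ) • v + ((n : ℝ) + 1) • v := add_le_add_right h _
          _ = c • v := by rw [← add_smul, hc]; ring_nf
      exact this
    have hzc2 : mul v d ≤ c • d := by
      refine hz2.trans ?_
      have h := smul_nonneg (by positivity : (0:ℝ) ≤ (k : ℝ) + 1) hd0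
      calc (n : ℝ) • d = (n : ℝ) • d + 0 := by rw [add_zero]
        _ ≤ (n : ℝ) • d + ((k : ℝ) + 1) • d := add_le_add_right h _
        _ = c • d := by rw [← add_smul, hc]; ring_nf
    have hinv : c⁻¹ • mul v d ≤ d ⊓ v := by
      refine le_inf ?_ ?_
      · calc c⁻¹ • mul v d ≤ c⁻¹ • (c • d) :=
              smul_le_smul_of_nonneg_left hzc2 (by positivity)
          _ = d := by rw [smul_smul, inv_mul_cancel₀ hcpos.ne', one_smul]
      · calc c⁻¹ • mul v d ≤ c⁻¹ • (c • v) :=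
              smul_le_smul_of_nonneg_left hzc1 (by positivity)
          _ = v := by rw [smul_smul, inv_mul_cancel₀ hcpos.ne', one_smul]
    rw [hdv] at hinv
    calc mul v d = c • (c⁻¹ • mul v d) := by
          rw [smul_smul, mul_inv_cancel₀ hcpos.ne', one_smul]
      _ ≤ c • (0 : A) := smul_le_smul_of_nonneg_left hinv hcpos.le
      _ = 0 := smul_zero c
  refine ⟨hd0, ?_⟩
  have hnd : (n : ℝ) • d = mul bn d + mul v d := by
    have h1 : mul ((n : ℝ) • e) d = (n : ℝ) • mul e d := by rw [map_smul]; rfl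
    have h2 : ((n : ℝ) • e : A) = bn + v := by
      rw [Nat.cast_smul_eq_nsmul]; rw [hv]; abel
    calc (n : ℝ) • d = mul ((n : ℝ) • e) d := by rw [h1, one_mul]
      _ = mul (bn + v) d := by rw [h2]
      _ = mul bn d + mul v d := by rw [map_add]; rfl
  have hda : d ≤ a := hdu.trans hua
  have hbna : bn ≤ a := inf_le_left
  calc (n : ℝ) • d = mul bn d + mul v d := hnd
    _ ≤ mul bn d + 0 := add_le_add_right hz0 _
    _ = mul bn d := add_zero _
    _ ≤ mul bn a := mul_mono_right mul mul_nonneg hbn0 hda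
    _ ≤ mul a a := mul_mono_left mul mul_nonneg ha hbna

end Aux

/-- In a Banach lattice algebra with identity `e`, for `a ≥ 0` the
sequence `aₙ = a ⊓ (n • e)` satisfies `‖a_m − a_n‖ ≤ ‖a‖²/n` for `m ≥ n ≥ 1`; hence it
is norm-Cauchy and converges to some `b ≥ 0` which is the supremum of the `aₙ`. -/
theorem inf_with_multiples_of_identity_converges
    {A : Type*} [NormedAddCommGroup A] [Lattice A] [HasSolidNorm A] [IsOrderedAddMonoid A]
    [NormedSpace ℝ A]
    [PosSMulStrictMono ℝ A] [PosSMulReflectLT ℝ A] [CompleteSpace A]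
    (mul : A →ₗ[ℝ] A →ₗ[ℝ] A)
    (mul_assoc : ∀ a b c : A, mul (mul a b) c = mul a (mul b c))
    (norm_mul_le : ∀ a b : A, ‖mul a b‖ ≤ ‖a‖ * ‖b‖)
    (mul_nonneg : ∀ a b : A, 0 ≤ a → 0 ≤ b → 0 ≤ mul a b)
    (e : A) (one_mul : ∀ a : A, mul e a = a) (mul_one : ∀ a : A, mul a e = a)
    (norm_e : ‖e‖ = 1)
    (a : A) (ha : 0 ≤ a) :
    (∀ m n : ℕ, 1 ≤ n → n ≤ m →
      ‖a ⊓ (m • e) - a ⊓ (n • e)‖ ≤ ‖a‖ ^ 2 / (n : ℝ)) ∧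
    CauchySeq (fun n : ℕ => a ⊓ (n • e)) ∧
    ∃ b : A, Filter.Tendsto (fun n : ℕ => a ⊓ (n • e)) Filter.atTop (nhds b) ∧
      0 ≤ b ∧ IsLUB {x : A | ∃ n : ℕ, 1 ≤ n ∧ x = a ⊓ (n • e)} b := by
  have he : 0 ≤ e :=
    unit_nonneg mul mul_nonneg mul_assoc norm_mul_le e one_mul mul_one norm_e
  -- the quantitative estimate
  have hest : ∀ m n : ℕ, 1 ≤ n → n ≤ m →
      ‖a ⊓ (m • e) - a ⊓ (n • e)‖ ≤ ‖a‖ ^ 2 / (n : ℝ) := by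
    intro m n hn1 hnm
    obtain ⟨hd0, hkey⟩ := key_est mul mul_nonneg e he one_mul mul_one a ha n m hnm
    have hnpos : (0 : ℝ) < (n : ℝ) := by exact_mod_cast hn1
    have h0 : (0 : A) ≤ (n : ℝ) • (a ⊓ (m • e) - a ⊓ (n • e)) :=
      smul_nonneg hnpos.le hd0
    have h1 : ‖(n : ℝ) • (a ⊓ (m • e) - a ⊓ (n • e))‖ ≤ ‖mul a a‖ :=
      norm_mono_nonneg h0 hkey
    rw [norm_smul, Real.norm_natCast] at h1
    have h2 : ‖mul a a‖ ≤ ‖a‖ ^ 2 := by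
      have := norm_mul_le a a
      nlinarith [norm_nonneg a]
    rw [le_div_iff₀ hnpos]
    nlinarith
  have hcauchy : CauchySeq (fun n : ℕ => a ⊓ (n • e)) := by
    rw [Metric.cauchySeq_iff']
    intro ε hε
    set N : ℕ := max 1 (Nat.floor (‖a‖ ^ 2 / ε) + 1) with hN
    refine ⟨N, fun n hn => ?_⟩
    have hN1 : 1 ≤ N := le_max_left _ _
    have hNpos : (0 : ℝ) < (N : ℝ) := by exact_mod_cast hN1
    rw [dist_eq_norm]
    refine lt_of_le_of_lt (hest n N hN1 hn) ?_
    rw [div_lt_iff₀ hNpos]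
    have h3 : ‖a‖ ^ 2 / ε < ((Nat.floor (‖a‖ ^ 2 / ε) + 1 : ℕ) : ℝ) := by
      push_cast
      exact Nat.lt_floor_add_one _
    have h4 : ((Nat.floor (‖a‖ ^ 2 / ε) + 1 : ℕ) : ℝ) ≤ (N : ℝ) := by
      exact_mod_cast le_max_right 1 _
    have h5 : ‖a‖ ^ 2 / ε < (N : ℝ) := h3.trans_le h4
    rw [div_lt_iff₀ hε] at h5
    linarith
  obtain ⟨b, hb⟩ := cauchySeq_tendsto_of_complete hcauchy
  refine ⟨hest, hcauchy, b, hb, ?_, ?_, ?_⟩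
  · exact ge_of_tendsto hb
      (Filter.Eventually.of_forall fun n => le_inf ha (nsmul_nonneg he n))
  · rintro x ⟨n, _, rfl⟩
    refine ge_of_tendsto hb ?_
    filter_upwards [Filter.eventually_ge_atTop n] with m hm
    exact inf_le_inf_left a (nsmul_le_nsmul_left he hm)
  · intro w hw
    refine le_of_tendsto hb ?_
    filter_upwards [Filter.eventually_ge_atTop 1] with m hm
    exact hw ⟨m, hm, rfl⟩
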